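/- An operator F on a normed space is power bounded and power bounded below (there exist γ, β > 0 with γ‖z‖ ≤ ‖Fⁿz‖ ≤ β‖z‖ for all n ≥ 1 and all z) if and only if F is similar to an isometry, in the sense that there is an equivalent norm under which F is an isometry. -/

import Mathlib

open Filter Topology

/-- An operator `F` on a complex normed space is power bounded and power bounded below
(there exist `γ, β > 0` with `γ‖z‖ ≤ ‖Fⁿz‖ ≤ β‖z‖` for all `n ≥ 1` and all `z`) if and
only if `F` is similar to an isometry, in the sense that there is a norm `N` on `Z`,
equivalent to the original norm, with `N (F z) = N z` for all `z`. -/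
theorem stmt13
    {Z : Type*} [NormedAddCommGroup Z] [NormedSpace ℂ Z]
    (F : Z →L[ℂ] Z) :
    (∃ γ β : ℝ, 0 < γ ∧ 0 < β ∧
      ∀ n : ℕ, 1 ≤ n → ∀ z : Z, γ * ‖z‖ ≤ ‖(F ^ n) z‖ ∧ ‖(F ^ n) z‖ ≤ β * ‖z‖) ↔
    (∃ N : Z → ℝ,
      -- N is a norm
      (∀ (c : ℂ) (z : Z), N (c • z) = ‖c‖ * N z) ∧
      (∀ z w : Z, N (z + w) ≤ N z + N w) ∧
      -- equivalent to the original norm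
      (∃ γ β : ℝ, 0 < γ ∧ 0 < β ∧ ∀ z : Z, γ * ‖z‖ ≤ N z ∧ N z ≤ β * ‖z‖) ∧
      -- F is an isometry with respect to N
      (∀ z : Z, N (F z) = N z)) := by
  constructor
  · rintro ⟨γ, β, hγ, hβ, h⟩
    set f : Z → ℕ → ℝ := fun z n => ‖(F ^ (n + 1)) z‖ with hf
    have hlow : ∀ z n, γ * ‖z‖ ≤ f z n := fun z n => (h (n+1) (Nat.le_add_left 1 n) z).1
    have hup : ∀ z n, f z n ≤ β * ‖z‖ := fun z n => (h (n+1) (Nat.le_add_left 1 n) z).2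
    have hbd : ∀ z, IsBoundedUnder (· ≤ ·) atTop (f z) :=
      fun z => isBoundedUnder_of ⟨β * ‖z‖, fun n => hup z n⟩
    have hbd' : ∀ z, IsBoundedUnder (· ≥ ·) atTop (f z) :=
      fun z => isBoundedUnder_of ⟨γ * ‖z‖, fun n => hlow z n⟩
    have hcobd : ∀ z, IsCoboundedUnder (· ≤ ·) atTop (f z) :=
      fun z => (hbd' z).isCoboundedUnder_le
    refine ⟨fun z => limsup (f z) atTop, ?_, ?_, ⟨γ, β, hγ, hβ, ?_⟩, ?_⟩
    · intro c z
      have hmono : Monotone (fun x : ℝ => ‖c‖ * x) :=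
        fun a b hab => mul_le_mul_of_nonneg_left hab (norm_nonneg c)
      have := hmono.map_limsup_of_continuousAt (F := atTop) (f z)
        ((continuous_const.mul continuous_id).continuousAt) (hbd z) (hcobd z)
      simp only [Function.comp_def] at this
      have heq : f (c • z) = fun n => ‖c‖ * f z n := by
        funext n; show ‖(F ^ (n + 1)) (c • z)‖ = ‖c‖ * ‖(F ^ (n + 1)) z‖; rw [map_smul, norm_smul]
      show limsup (f (c • z)) atTop = ‖c‖ * limsup (f z) atTop
      rw [heq, this]
    · intro z w
      have h1 : limsup (f (z + w)) atTop ≤ limsup (f z + f w) atTop := by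
        refine limsup_le_limsup (Eventually.of_forall fun n => ?_)
          (hcobd (z + w)) (isBoundedUnder_le_add (hbd z) (hbd w))
        simpa [hf] using norm_add_le ((F ^ (n+1)) z) ((F ^ (n+1)) w)
      exact h1.trans (limsup_add_le (hbd' z) (hbd z) (hcobd w) (hbd w))
    · intro z
      constructor
      · exact le_limsup_of_frequently_le (Frequently.of_forall fun n => hlow z n) (hbd z)
      · exact limsup_le_of_le (hcobd z) (Eventually.of_forall fun n => hup z n)
    · intro z
      have heq : f (F z) = fun n => f z (n + 1) := by
        funext n
        show ‖(F ^ (n + 1)) (F z)‖ = ‖(F ^ (n + 1 + 1)) z‖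
        rw [pow_succ (F) (n+1)]
        rfl
      show limsup (f (F z)) atTop = _
      rw [heq, limsup_nat_add]
  · rintro ⟨N, hN1, hN2, ⟨γ, β, hγ, hβ, hN⟩, hiso⟩
    have hFn : ∀ (n : ℕ) (z : Z), N ((F ^ n) z) = N z := by
      intro n
      induction n with
      | zero => intro z; simp
      | succ k ih =>
        intro z
        rw [pow_succ]
        have : (F ^ k * F) z = (F ^ k) (F z) := rfl
        rw [this, ih, hiso]
    refine ⟨γ / β, β / γ, div_pos hγ hβ, div_pos hβ hγ, fun n hn z => ?_⟩
    have h1 := hN z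
    have h2 := hN ((F ^ n) z)
    rw [hFn n z] at h2
    constructor
    · rw [div_mul_eq_mul_div, div_le_iff₀ hβ]
      calc γ * ‖z‖ ≤ N z := h1.1
        _ ≤ β * ‖(F ^ n) z‖ := h2.2
        _ = ‖(F ^ n) z‖ * β := mul_comm _ _
    · rw [div_mul_eq_mul_div, le_div_iff₀ hγ]
      calc ‖(F ^ n) z‖ * γ = γ * ‖(F ^ n) z‖ := mul_comm _ _
        _ ≤ N z := h2.1
        _ ≤ β * ‖z‖ := h1.2
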